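/- Let Assumption 2 hold. Then (x*, y*, w*) attains the infimum of problem (MND) with optimal value δ^N = 0 if and only if (x*, y*) is a normalized Nash equilibrium. -/

import Mathlib

/-!
Statement 6 (Proposition 4 of the paper): under Assumption 2, (x*,y*,w*) attains the
infimum of (MND) with δ^N = 0 if and only if (x*,y*) is a normalized Nash equilibrium.
-/

theorem mnd_characterizes_NNE
    (n₀ m : ℕ) (n : Fin m → ℕ)
    (F : ∀ i : Fin m, Set ((Fin n₀ → ℝ) × (Fin (n i) → ℝ)))
    (g : ∀ i : Fin m, (Fin n₀ → ℝ) → (Fin (n i) → ℝ) → ℝ)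
    (G : Set ((Fin n₀ → ℝ) × (∀ i, Fin (n i) → ℝ)))
    (Fhat : Set ((Fin n₀ → ℝ) × (∀ i, Fin (n i) → ℝ)))
    (hFhat : Fhat = {p | ∀ i, (p.1, p.2 i) ∈ F i})
    -- g^N(x) = inf { Σᵢ gᵢ(x,yᵢ') : y' ∈ π₋₀(F̂ ∩ G) }
    (gN : (Fin n₀ → ℝ) → EReal)
    (hgN : ∀ x, gN x =
      ⨅ y' : {y' : ∀ i, Fin (n i) → ℝ // ∃ x', (x', y') ∈ Fhat ∩ G},
        ((∑ i, g i x (y'.1 i) : ℝ) : EReal))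
    -- Assumption 2: g^N(x) > −∞ for every x ∈ π₀(F̂ ∩ G)
    (hA2 : ∀ x : Fin n₀ → ℝ, (∃ y, (x, y) ∈ Fhat ∩ G) → ⊥ < gN x)
    -- feasible set and objective of (MND)
    (MNDfeas : Set (((Fin n₀ → ℝ) × (∀ i, Fin (n i) → ℝ)) × ℝ))
    (hMNDfeas : MNDfeas = {q | q.1 ∈ Fhat ∩ G ∧
      ∀ y' : ∀ i, Fin (n i) → ℝ, (∃ x', (x', y') ∈ Fhat ∩ G) →
        q.2 ≤ ∑ i, g i q.1.1 (y' i)})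
    (MNDobj : (((Fin n₀ → ℝ) × (∀ i, Fin (n i) → ℝ)) × ℝ) → EReal)
    (hMNDobj : ∀ q, MNDobj q = (((∑ i, g i q.1.1 (q.1.2 i)) - q.2 : ℝ) : EReal))
    -- optimal value δ^N of (MND)
    (δN : EReal)
    (hδN : δN = sInf (MNDobj '' MNDfeas))
    -- the candidate point (x*, y*)
    (p : (Fin n₀ → ℝ) × (∀ i, Fin (n i) → ℝ)) :
    -- some (x*, y*, w*) attains the infimum of (MND) with δ^N = 0 iff (x*, y*) is an NNE
    ((∃ w : ℝ, (p, w) ∈ MNDfeas ∧ MNDobj (p, w) = δN) ∧ δN = 0) ↔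
      (p ∈ Fhat ∩ G ∧
        ∀ y' : ∀ i, Fin (n i) → ℝ, (∃ x', (x', y') ∈ Fhat ∩ G) →
          ∑ i, g i p.1 (p.2 i) ≤ ∑ i, g i p.1 (y' i)) := by
  constructor
  · rintro ⟨⟨w, hfeas, hobj⟩, hzero⟩
    rw [hMNDfeas] at hfeas
    obtain ⟨hpFG, hw⟩ := hfeas
    refine ⟨hpFG, fun y' hy' => ?_⟩
    rw [hMNDobj, hzero] at hobj
    have h0 : ((∑ i, g i p.1 (p.2 i)) - w : ℝ) = 0 := by
      exact_mod_cast hobj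
    have : (∑ i, g i p.1 (p.2 i)) = w := by linarith
    rw [this]
    exact hw y' hy'
  · rintro ⟨hpFG, hNNE⟩
    set w : ℝ := ∑ i, g i p.1 (p.2 i) with hwdef
    have hfeas : (p, w) ∈ MNDfeas := by
      rw [hMNDfeas]
      exact ⟨hpFG, hNNE⟩
    have hobj0 : MNDobj (p, w) = 0 := by
      rw [hMNDobj]
      show ((w - w : ℝ) : EReal) = 0
      simp
    have hle : δN ≤ 0 := by
      rw [hδN, ← hobj0]
      exact sInf_le ⟨(p, w), hfeas, rfl⟩
    have hge : (0 : EReal) ≤ δN := by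
      rw [hδN]
      refine le_sInf ?_
      rintro v ⟨q, hq, rfl⟩
      rw [hMNDfeas] at hq
      obtain ⟨hq1, hq2⟩ := hq
      have : q.2 ≤ ∑ i, g i q.1.1 (q.1.2 i) := hq2 q.1.2 ⟨q.1.1, hq1⟩
      rw [hMNDobj]
      exact_mod_cast sub_nonneg.mpr this
    have hδ0 : δN = 0 := le_antisymm hle hge
    exact ⟨⟨w, hfeas, by rw [hobj0, hδ0]⟩, hδ0⟩
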